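/- Let p be an odd prime, q a power of p (viewed as a real number), and let n ≥ 1 and k ≥ 0 be integers. Let ℛ_n^{0k} denote the finite set of weakly decreasing integer tuples λ = (λ_1, …, λ_n) with k ≥ λ_1 ≥ … ≥ λ_n ≥ 0, and for λ, μ ∈ ℛ_n^{0k} set 𝓑_λ(μ) := ∑_{1 ≤ i, j ≤ n} min(λ_i, μ_j). Then the square matrix ((-q)^{𝓑_λ(μ)})_{λ, μ ∈ ℛ_n^{0k}} is invertible; equivalently, the functions G_λ : ℛ_n^{0k} → ℝ, G_λ(μ) = (-q)^{𝓑_λ(μ)}, for λ ∈ ℛ_n^{0k}, are linearly independent. -/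

import Mathlib

/- Lemma 3.2: invertibility of the matrix ((-q)^{𝓑_λ(μ)}) indexed by weakly decreasing
tuples in [0,k]^n, equivalently linear independence of the functions G_λ. -/

/-- Weakly decreasing integer tuples λ with k ≥ λ_1 ≥ … ≥ λ_n ≥ 0
(encoded with values in `Fin (k+1)`). -/
abbrev R0k (n k : ℕ) : Type :=
  {f : Fin n → Fin (k + 1) // ∀ i j : Fin n, i ≤ j → f j ≤ f i}

/-- 𝓑_λ(μ) = ∑_{1 ≤ i, j ≤ n} min(λ_i, μ_j). -/
def Bsum {n k : ℕ} (l m : R0k n k) : ℕ :=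
  ∑ i : Fin n, ∑ j : Fin n, min ((l.1 i : ℕ)) ((m.1 j : ℕ))

section Aux

open Finset

/-- Antitone tuples of length `k` with entries `≤ n`. -/
def Dset (k n : ℕ) : Finset (Fin k → ℕ) :=
  (Fintype.piFinset fun _ => Finset.range (n+1)).filter
    (fun f => ∀ i j : Fin k, i ≤ j → f j ≤ f i)

lemma mem_Dset {k n : ℕ} {a : Fin k → ℕ} :
    a ∈ Dset k n ↔ (∀ i j : Fin k, i ≤ j → a j ≤ a i) ∧ ∀ i, a i ≤ n := by
  simp only [Dset, Finset.mem_filter, Fintype.mem_piFinset, Finset.mem_range,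
    Nat.lt_succ_iff]
  tauto

lemma Dset_mono {k e N : ℕ} (h : e ≤ N) : Dset k e ⊆ Dset k N := by
  intro a ha
  rw [mem_Dset] at ha ⊢
  exact ⟨ha.1, fun i => le_trans (ha.2 i) h⟩

lemma cons_mem_Dset {k N : ℕ} {e : ℕ} {b : Fin k → ℕ} :
    Fin.cons e b ∈ Dset (k+1) N ↔ e ≤ N ∧ b ∈ Dset k e := by
  simp only [mem_Dset]
  constructor
  · rintro ⟨hmono, hbd⟩
    refine ⟨by simpa using hbd 0, ⟨fun i j hij => ?_, fun i => ?_⟩⟩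
    · have := hmono i.succ j.succ (by simpa using hij)
      simpa using this
    · have := hmono 0 i.succ (Fin.zero_le _)
      simpa using this
  · rintro ⟨heN, hmono, hbd⟩
    constructor
    · intro i j hij
      induction i using Fin.cases with
      | zero =>
        induction j using Fin.cases with
        | zero => exact le_refl _
        | succ j' => simpa using hbd j'
      | succ i' =>
        induction j using Fin.cases with
        | zero => exact absurd (Fin.le_zero_iff.mp hij) (Fin.succ_ne_zero _)
        | succ j' => simpa using hmono i' j' (by simpa using hij)
    · intro i
      refine Fin.cases ?_ (fun i' => ?_) i
      · simpa using heN
      · simpa using le_trans (le_trans (hbd i') heN) (le_refl _)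

/-- dot product of tuples -/
def ip {k : ℕ} (a b : Fin k → ℕ) : ℕ := ∑ t, a t * b t

lemma ip_cons {k : ℕ} (e m : ℕ) (b c : Fin k → ℕ) :
    ip (Fin.cons e b) (Fin.cons m c) = e * m + ip b c := by
  simp [ip, Fin.sum_univ_succ]

lemma Dset_succ_eq {k N : ℕ} :
    Dset (k+1) N =
      (Finset.range (N+1)).biUnion (fun e => (Dset k e).image (Fin.cons e)) := by
  ext a
  simp only [Finset.mem_biUnion, Finset.mem_range, Finset.mem_image, Nat.lt_succ_iff]
  constructor
  · intro ha
    refine ⟨a 0, ?_, Fin.tail a, ?_, Fin.cons_self_tail a⟩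
    · have := (cons_mem_Dset (e := a 0) (b := Fin.tail a)).mp
        (by rwa [Fin.cons_self_tail])
      exact this.1
    · have := (cons_mem_Dset (e := a 0) (b := Fin.tail a)).mp
        (by rwa [Fin.cons_self_tail])
      exact this.2
  · rintro ⟨e, heN, b, hb, rfl⟩
    exact cons_mem_Dset.mpr ⟨heN, hb⟩

lemma sum_Dset_succ {k N : ℕ} (F : (Fin (k+1) → ℕ) → ℝ) :
    ∑ a ∈ Dset (k+1) N, F a
      = ∑ e ∈ Finset.range (N+1), ∑ b ∈ Dset k e, F (Fin.cons e b) := by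
  rw [Dset_succ_eq, Finset.sum_biUnion]
  · refine Finset.sum_congr rfl fun e _ => ?_
    rw [Finset.sum_image]
    intro y _ z _ h
    have := congrArg Fin.tail h
    simpa using this
  · intro e _ e' _ hee
    simp only [Function.onFun]
    refine Finset.disjoint_left.mpr ?_
    rintro a ha ha'
    simp only [Finset.mem_image] at ha ha'
    obtain ⟨y, _, rfl⟩ := ha
    obtain ⟨z, _, hz⟩ := ha'
    exact hee (by simpa using (congrArg (fun f => f 0) hz).symm)

lemma reshape {k N : ℕ} (x : ℝ) (d : (Fin (k+1) → ℕ) → ℝ)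
    (hd : ∀ a, a ∉ Dset (k+1) N → d a = 0) (m : ℕ) (w : Fin k → ℕ) :
    ∑ a ∈ Dset (k+1) N, d a * x ^ ip a (Fin.cons m w)
      = ∑ b ∈ Dset k N,
          (∑ t ∈ Finset.range (N+1), d (Fin.cons t b) * x ^ (t*m)) * x ^ ip b w := by
  rw [sum_Dset_succ (fun a => d a * x ^ ip a (Fin.cons m w))]
  have step1 : ∀ e ∈ Finset.range (N+1),
      ∑ b ∈ Dset k e, d (Fin.cons e b) * x ^ ip (Fin.cons e b) (Fin.cons m w)
        = ∑ b ∈ Dset k N, d (Fin.cons e b) * x ^ (e*m) * x ^ ip b w := by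
    intro e he
    have h1 : ∀ b : Fin k → ℕ,
        d (Fin.cons e b) * x ^ ip (Fin.cons e b) (Fin.cons m w)
          = d (Fin.cons e b) * x ^ (e*m) * x ^ ip b w := by
      intro b
      rw [ip_cons, pow_add, mul_assoc]
    simp only [h1]
    refine Finset.sum_subset (Dset_mono (Nat.lt_succ_iff.mp (Finset.mem_range.mp he)))
      fun b _ hbe => ?_
    rw [hd _ (fun hc => hbe (cons_mem_Dset.mp hc).2), zero_mul, zero_mul]
  rw [Finset.sum_congr rfl step1, Finset.sum_comm]
  refine Finset.sum_congr rfl fun b _ => ?_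
  rw [Finset.sum_mul]

theorem claim (x : ℝ) (hx : 1 < |x|) :
    ∀ (k n : ℕ) (c : (Fin k → ℕ) → ℝ),
      (∀ a, a ∉ Dset k n → c a = 0) →
      (∀ μ ∈ Dset k n, ∑ a ∈ Dset k n, c a * x ^ ip a μ = 0) →
      ∀ a, c a = 0 := by
  have hx0 : x ≠ 0 := by
    intro h
    rw [h, abs_zero] at hx
    linarith
  have hxpow : ∀ m N : ℕ, m < N → x ^ m ≠ x ^ N := by
    intro m N hmN h
    have h2 : |x| ^ m < |x| ^ N := pow_lt_pow_right₀ hx hmN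
    rw [← abs_pow, ← abs_pow, h] at h2
    exact lt_irrefl _ h2
  intro k
  induction k with
  | zero =>
    intro n c h1 h2 a
    have hall : ∀ g : Fin 0 → ℕ, g = a := fun g => funext fun i => i.elim0
    have hmem : a ∈ Dset 0 n := mem_Dset.mpr ⟨fun i => i.elim0, fun i => i.elim0⟩
    have h := h2 a hmem
    have hsing : Dset 0 n = {a} := by
      ext g
      simp only [Finset.mem_singleton]
      constructor
      · intro _; exact hall g
      · intro h; rw [h]; exact hmem
    rw [hsing, Finset.sum_singleton] at h
    have hip : ip a a = 0 := by simp [ip]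
    rwa [hip, pow_zero, mul_one] at h
  | succ k ihk =>
    intro n
    induction n with
    | zero =>
      intro c h1 h2 a
      have hzero : (fun _ => 0 : Fin (k+1) → ℕ) ∈ Dset (k+1) 0 :=
        mem_Dset.mpr ⟨fun i j _ => le_refl _, fun i => le_refl _⟩
      have hchar : ∀ g : Fin (k+1) → ℕ, g ∈ Dset (k+1) 0 → g = fun _ => 0 := by
        intro g hg
        exact funext fun i => Nat.le_zero.mp ((mem_Dset.mp hg).2 i)
      have h := h2 _ hzero
      have hsing : Dset (k+1) 0 = {fun _ => 0} := by
        ext g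
        simp only [Finset.mem_singleton]
        constructor
        · exact hchar g
        · intro hg; rw [hg]; exact hzero
      rw [hsing, Finset.sum_singleton] at h
      have hip : ip (fun _ => 0 : Fin (k+1) → ℕ) (fun _ => 0) = 0 := by simp [ip]
      rw [hip, pow_zero, mul_one] at h
      by_cases ha : a ∈ Dset (k+1) 0
      · rw [hchar a ha]; exact h
      · exact h1 a ha
    | succ n ihn =>
      intro c h1 h2
      -- Step 1 : the "top slice" relations
      have hdag : ∀ b : Fin k → ℕ,
          ∑ t ∈ Finset.range (n+2), c (Fin.cons t b) * x ^ (t*(n+1)) = 0 := by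
        refine ihk (n+1)
          (fun b => ∑ t ∈ Finset.range (n+2), c (Fin.cons t b) * x ^ (t*(n+1)))
          (fun b hb => Finset.sum_eq_zero fun t _ => by
            rw [h1 _ (fun hc => hb (Dset_mono (cons_mem_Dset.mp hc).1
              (cons_mem_Dset.mp hc).2)), zero_mul]) ?_
        intro w hw
        have hmem : Fin.cons (n+1) w ∈ Dset (k+1) (n+1) :=
          cons_mem_Dset.mpr ⟨le_refl _, hw⟩
        have h0 := h2 _ hmem
        rw [reshape x c h1 (n+1) w] at h0
        exact h0
      -- the divided coefficients
      set C1 : (Fin (k+1) → ℕ) → ℝ := fun a =>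
        if a ∈ Dset (k+1) n then
          ∑ t ∈ Finset.Icc (a 0 + 1) (n+1),
            x ^ ((n+1)*(t - 1 - a 0)) * c (Fin.cons t (Fin.tail a))
        else 0 with hC1def
      have hC1supp : ∀ a, a ∉ Dset (k+1) n → C1 a = 0 := by
        intro a ha
        rw [hC1def]
        simp only [if_neg ha]
      have hC1cons : ∀ (s : ℕ) (b : Fin k → ℕ),
          C1 (Fin.cons s b) = if Fin.cons s b ∈ Dset (k+1) n then
            ∑ t ∈ Finset.Icc (s+1) (n+1),
              x ^ ((n+1)*(t - 1 - s)) * c (Fin.cons t b)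
          else 0 := by
        intro s b
        rw [hC1def]
        simp only [Fin.cons_zero, Fin.tail_cons]
      have hG0 : ∀ (b : Fin k → ℕ) (s : ℕ), s ≤ n →
          C1 (Fin.cons s b)
            = ∑ t ∈ Finset.Icc (s+1) (n+1),
                x ^ ((n+1)*(t - 1 - s)) * c (Fin.cons t b) := by
        intro b s hs
        rw [hC1cons]
        by_cases hmem : Fin.cons s b ∈ Dset (k+1) n
        · rw [if_pos hmem]
        · rw [if_neg hmem]
          by_cases hbN : b ∈ Dset k (n+1)
          · have hbs : b ∉ Dset k s := fun hc => hmem (cons_mem_Dset.mpr ⟨hs, hc⟩)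
            have hex : ∃ i, s < b i := by
              by_contra hno
              push_neg at hno
              exact hbs (mem_Dset.mpr ⟨(mem_Dset.mp hbN).1, hno⟩)
            obtain ⟨i0, hi0⟩ := hex
            have hA0 : ∀ t, t ≤ s → c (Fin.cons t b) = 0 := by
              intro t ht
              refine h1 _ fun hc => ?_
              have hb2 := (mem_Dset.mp (cons_mem_Dset.mp hc).2).2 i0
              omega
            have key : x ^ ((n+1)*(s+1)) *
                ∑ t ∈ Finset.Icc (s+1) (n+1),
                  x ^ ((n+1)*(t-1-s)) * c (Fin.cons t b) = 0 := by
              rw [Finset.mul_sum]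
              have hterm : ∀ t ∈ Finset.Icc (s+1) (n+1),
                  x ^ ((n+1)*(s+1)) * (x ^ ((n+1)*(t-1-s)) * c (Fin.cons t b))
                    = c (Fin.cons t b) * x ^ (t*(n+1)) := by
                intro t ht
                rw [← mul_assoc, ← pow_add]
                have h2' : (s+1) + (t-1-s) = t := by
                  have := (Finset.mem_Icc.mp ht).1
                  omega
                have he : (n+1)*(s+1) + (n+1)*(t-1-s) = t*(n+1) := by
                  calc (n+1)*(s+1) + (n+1)*(t-1-s) = (n+1)*((s+1)+(t-1-s)) := by ring
                    _ = (n+1)*t := by rw [h2']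
                    _ = t*(n+1) := by ring
                rw [he]
                ring
              rw [Finset.sum_congr rfl hterm]
              have hsub : Finset.Icc (s+1) (n+1) ⊆ Finset.range (n+2) := by
                intro u hu
                simp only [Finset.mem_Icc] at hu
                simp only [Finset.mem_range]
                omega
              rw [Finset.sum_subset hsub (fun u hu hnotu => by
                simp only [Finset.mem_Icc, Finset.mem_range] at hu hnotu
                rw [hA0 u (by omega), zero_mul])]
              exact hdag b
            have hx1 : x ^ ((n+1)*(s+1)) ≠ 0 := pow_ne_zero _ hx0
            exact ((mul_eq_zero.mp key).resolve_left hx1).symm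
          · refine (Finset.sum_eq_zero fun t ht => ?_).symm
            rw [h1 _ (fun hc => hbN (Dset_mono (cons_mem_Dset.mp hc).1
              (cons_mem_Dset.mp hc).2)), mul_zero]
      -- vanishing of boundary coefficients
      have hvanish : ∀ b, b ∈ Dset k (n+1) → b ∉ Dset k n →
          ∀ t, t ≤ n+1 → c (Fin.cons t b) = 0 := by
        intro b hbN hbn t ht
        have hex : ∃ i, n < b i := by
          by_contra hno
          push_neg at hno
          exact hbn (mem_Dset.mpr ⟨(mem_Dset.mp hbN).1, hno⟩)
        obtain ⟨i0, hi0⟩ := hex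
        have hsmall : ∀ u, u ≤ n → c (Fin.cons u b) = 0 := by
          intro u hu
          refine h1 _ fun hc => ?_
          have hb2 := (mem_Dset.mp (cons_mem_Dset.mp hc).2).2 i0
          omega
        rcases Nat.lt_or_ge t (n+1) with h' | h'
        · exact hsmall t (by omega)
        · have ht' : t = n+1 := by omega
          subst ht'
          have h0 := hdag b
          rw [Finset.sum_range_succ] at h0
          rw [Finset.sum_eq_zero (fun u hu => by
            rw [hsmall u (by simpa [Nat.lt_succ_iff] using hu), zero_mul]),
            zero_add] at h0
          exact (mul_eq_zero.mp h0).resolve_right (pow_ne_zero _ hx0)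
      -- the key telescoping identity
      have hG : ∀ (b : Fin k → ℕ) (m : ℕ), m ≤ n →
          (x ^ m - x ^ (n+1)) *
              ∑ s ∈ Finset.range (n+1), C1 (Fin.cons s b) * x ^ (s*m)
            = ∑ t ∈ Finset.range (n+2), c (Fin.cons t b) * x ^ (t*m) := by
        intro b m _
        have e1 : ∑ s ∈ Finset.range (n+1), C1 (Fin.cons s b) * x ^ (s*m)
            = ∑ s ∈ Finset.range (n+1), ∑ t ∈ Finset.range (n+2),
                (if s < t then
                  x ^ ((n+1)*(t-1-s)) * c (Fin.cons t b) * x ^ (s*m) else 0) := by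
          refine Finset.sum_congr rfl fun s hs => ?_
          rw [hG0 b s (Nat.lt_succ_iff.mp (Finset.mem_range.mp hs)), Finset.sum_mul]
          have hicc : Finset.Icc (s+1) (n+1)
              = (Finset.range (n+2)).filter (fun t => s < t) := by
            ext u
            simp only [Finset.mem_Icc, Finset.mem_filter, Finset.mem_range]
            omega
          rw [hicc, Finset.sum_filter]
        rw [e1, Finset.mul_sum]
        have e2 : ∀ s ∈ Finset.range (n+1),
            (x ^ m - x ^ (n+1)) * ∑ t ∈ Finset.range (n+2),
                (if s < t then
                  x ^ ((n+1)*(t-1-s)) * c (Fin.cons t b) * x ^ (s*m) else 0)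
            = ∑ t ∈ Finset.range (n+2),
                (if s < t then (x ^ m - x ^ (n+1)) *
                  (x ^ ((n+1)*(t-1-s)) * c (Fin.cons t b) * x ^ (s*m)) else 0) := by
          intro s _
          rw [Finset.mul_sum]
          refine Finset.sum_congr rfl fun t _ => ?_
          rw [mul_ite, mul_zero]
        rw [Finset.sum_congr rfl e2, Finset.sum_comm]
        have e3 : ∀ t ∈ Finset.range (n+2),
            ∑ s ∈ Finset.range (n+1),
                (if s < t then (x ^ m - x ^ (n+1)) *
                  (x ^ ((n+1)*(t-1-s)) * c (Fin.cons t b) * x ^ (s*m)) else 0)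
            = c (Fin.cons t b) * x ^ (t*m)
                - c (Fin.cons t b) * x ^ ((n+1)*t) := by
          intro t ht
          have htn : t ≤ n+1 := Nat.lt_succ_iff.mp (Finset.mem_range.mp ht)
          have hfil : ∑ s ∈ Finset.range (n+1),
              (if s < t then (x ^ m - x ^ (n+1)) *
                (x ^ ((n+1)*(t-1-s)) * c (Fin.cons t b) * x ^ (s*m)) else 0)
              = ∑ s ∈ Finset.range t, (x ^ m - x ^ (n+1)) *
                (x ^ ((n+1)*(t-1-s)) * c (Fin.cons t b) * x ^ (s*m)) := by
            rw [← Finset.sum_filter]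
            refine Finset.sum_congr ?_ fun _ _ => rfl
            ext u
            simp only [Finset.mem_filter, Finset.mem_range]
            omega
          rw [hfil]
          have hterm : ∀ s ∈ Finset.range t,
              (x ^ m - x ^ (n+1)) *
                (x ^ ((n+1)*(t-1-s)) * c (Fin.cons t b) * x ^ (s*m))
              = c (Fin.cons t b) *
                  (x ^ ((n+1)*(t-(s+1)) + (s+1)*m) - x ^ ((n+1)*(t-s) + s*m)) := by
            intro s hs
            have hst : s < t := Finset.mem_range.mp hs
            have ea : (n+1)*(t-(s+1)) + (s+1)*m = m + ((n+1)*(t-1-s) + s*m) := by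
              have h' : t - (s+1) = t - 1 - s := by omega
              rw [h']
              ring
            have eb : (n+1)*(t-s) + s*m = (n+1) + ((n+1)*(t-1-s) + s*m) := by
              have h' : t - s = (t - 1 - s) + 1 := by omega
              rw [h']
              ring
            rw [ea, eb, pow_add, pow_add, pow_add]
            ring
          rw [Finset.sum_congr rfl hterm, ← Finset.mul_sum]
          have htel : ∑ s ∈ Finset.range t,
              (x ^ ((n+1)*(t-(s+1)) + (s+1)*m) - x ^ ((n+1)*(t-s) + s*m))
              = x ^ ((n+1)*(t-t) + t*m) - x ^ ((n+1)*(t-0) + 0*m) :=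
            Finset.sum_range_sub (fun s => x ^ ((n+1)*(t-s) + s*m)) t
          rw [htel]
          have ec : (n+1)*(t-t) + t*m = t*m := by
            have h' : t - t = 0 := by omega
            rw [h']
            ring
          have ed : (n+1)*(t-0) + 0*m = (n+1)*t := by
            have h' : t - 0 = t := by omega
            rw [h']
            ring
          rw [ec, ed, mul_sub]
        rw [Finset.sum_congr rfl e3, Finset.sum_sub_distrib]
        have ee : ∑ t ∈ Finset.range (n+2), c (Fin.cons t b) * x ^ ((n+1)*t) = 0 := by
          rw [← hdag b]
          refine Finset.sum_congr rfl fun t _ => ?_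
          rw [Nat.mul_comm]
        rw [ee, sub_zero]
      -- C1 kills all evaluations at level n
      have hE1 : ∀ μ ∈ Dset (k+1) n,
          ∑ a ∈ Dset (k+1) n, C1 a * x ^ ip a μ = 0 := by
        intro μ hμ
        have hcons : Fin.cons (μ 0) (Fin.tail μ) = μ := Fin.cons_self_tail μ
        obtain ⟨hm, hw⟩ := cons_mem_Dset.mp (hcons ▸ hμ)
        have hne : x ^ (μ 0) - x ^ (n+1) ≠ 0 :=
          sub_ne_zero.mpr (hxpow _ _ (by omega))
        refine mul_left_cancel₀ hne ?_
        rw [mul_zero]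
        calc (x ^ (μ 0) - x ^ (n+1)) * ∑ a ∈ Dset (k+1) n, C1 a * x ^ ip a μ
            = (x ^ (μ 0) - x ^ (n+1)) * ∑ a ∈ Dset (k+1) n,
                C1 a * x ^ ip a (Fin.cons (μ 0) (Fin.tail μ)) := by rw [hcons]
          _ = (x ^ (μ 0) - x ^ (n+1)) * ∑ b ∈ Dset k n,
                (∑ t ∈ Finset.range (n+1), C1 (Fin.cons t b) * x ^ (t*(μ 0)))
                  * x ^ ip b (Fin.tail μ) := by
              rw [reshape x C1 hC1supp (μ 0) (Fin.tail μ)]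
          _ = ∑ b ∈ Dset k n,
                ((x ^ (μ 0) - x ^ (n+1)) *
                  ∑ t ∈ Finset.range (n+1), C1 (Fin.cons t b) * x ^ (t*(μ 0)))
                  * x ^ ip b (Fin.tail μ) := by
              rw [Finset.mul_sum]
              exact Finset.sum_congr rfl fun b _ => by ring
          _ = ∑ b ∈ Dset k n,
                (∑ t ∈ Finset.range (n+2), c (Fin.cons t b) * x ^ (t*(μ 0)))
                  * x ^ ip b (Fin.tail μ) :=
              Finset.sum_congr rfl fun b _ => by rw [hG b (μ 0) hm]
          _ = ∑ b ∈ Dset k (n+1),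
                (∑ t ∈ Finset.range (n+2), c (Fin.cons t b) * x ^ (t*(μ 0)))
                  * x ^ ip b (Fin.tail μ) := by
              refine Finset.sum_subset (Dset_mono (by omega)) fun b hbN hbn => ?_
              rw [Finset.sum_eq_zero (fun t ht => by
                rw [hvanish b hbN hbn t
                  (Nat.lt_succ_iff.mp (Finset.mem_range.mp ht)), zero_mul]),
                zero_mul]
          _ = ∑ a ∈ Dset (k+1) (n+1),
                c a * x ^ ip a (Fin.cons (μ 0) (Fin.tail μ)) :=
              (reshape x c h1 (μ 0) (Fin.tail μ)).symm
          _ = 0 := h2 _ (cons_mem_Dset.mpr ⟨by omega, hw⟩)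
      have hC1zero : ∀ a, C1 a = 0 := ihn C1 hC1supp hE1
      -- extraction of the coefficients
      intro a
      by_cases haN : a ∈ Dset (k+1) (n+1)
      · have hcons : Fin.cons (a 0) (Fin.tail a) = a := Fin.cons_self_tail a
        obtain ⟨ht0, hb⟩ := cons_mem_Dset.mp (hcons ▸ haN)
        set b := Fin.tail a with hbdef
        have hSzero : ∀ s : ℕ,
            ∑ t ∈ Finset.Icc (s+1) (n+1),
              x ^ ((n+1)*(t-1-s)) * c (Fin.cons t b) = 0 := by
          intro s
          rcases le_or_gt s n with hs | hs
          · rw [← hG0 b s hs]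
            exact hC1zero _
          · rw [Finset.Icc_eq_empty (by omega), Finset.sum_empty]
        have hct : ∀ t : ℕ, 1 ≤ t → t ≤ n+1 → c (Fin.cons t b) = 0 := by
          intro t h1t h2t
          have hrec : ∑ u ∈ Finset.Icc ((t-1)+1) (n+1),
                x ^ ((n+1)*(u-1-(t-1))) * c (Fin.cons u b)
              = c (Fin.cons t b) + x^(n+1) *
                  ∑ u ∈ Finset.Icc (t+1) (n+1),
                    x ^ ((n+1)*(u-1-t)) * c (Fin.cons u b) := by
            have hins : Finset.Icc ((t-1)+1) (n+1)
                = insert t (Finset.Icc (t+1) (n+1)) := by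
              ext u
              simp only [Finset.mem_Icc, Finset.mem_insert]
              omega
            rw [hins, Finset.sum_insert (by simp only [Finset.mem_Icc]; omega)]
            have h0 : (n+1)*(t-1-(t-1)) = 0 := by
              have h' : t-1-(t-1) = 0 := by omega
              rw [h', Nat.mul_zero]
            rw [h0, pow_zero, one_mul]
            congr 1
            rw [Finset.mul_sum]
            refine Finset.sum_congr rfl fun u hu => ?_
            have hu1 : t+1 ≤ u := (Finset.mem_Icc.mp hu).1
            rw [← mul_assoc, ← pow_add]
            have he : (n+1) + (n+1)*(u-1-t) = (n+1)*(u-1-(t-1)) := by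
              have h' : u-1-(t-1) = (u-1-t)+1 := by omega
              rw [h']
              ring
            rw [he]
          have hfin := hSzero (t-1)
          rw [hrec, hSzero t, mul_zero, add_zero] at hfin
          exact hfin
        have hc0 : c (Fin.cons 0 b) = 0 := by
          have h0 := hdag b
          rw [Finset.sum_range_succ'] at h0
          rw [Finset.sum_eq_zero (fun i hi => by
            rw [hct (i+1) (by omega)
              (by have := Finset.mem_range.mp hi; omega), zero_mul]),
            zero_add] at h0
          simpa using h0
        rcases Nat.eq_zero_or_pos (a 0) with h' | h'
        · rw [← hcons, h']
          exact hc0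
        · rw [← hcons]
          exact hct (a 0) h' ht0
      · exact h1 a haN

lemma card_step {a : ℕ} (f : Fin a → ℕ)
    (hf : ∀ i j : Fin a, i ≤ j → f j ≤ f i) (i : Fin a) (s : ℕ) :
    s + 1 ≤ f i ↔ (i : ℕ) + 1 ≤ (Finset.univ.filter (fun j => s + 1 ≤ f j)).card := by
  constructor
  · intro hfi
    have hsub : Finset.Iic i ⊆ Finset.univ.filter (fun j => s + 1 ≤ f j) := by
      intro j hj
      rw [Finset.mem_Iic] at hj
      exact Finset.mem_filter.mpr ⟨Finset.mem_univ _, le_trans hfi (hf j i hj)⟩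
    have h := Finset.card_le_card hsub
    rwa [Fin.card_Iic] at h
  · intro hcard
    by_contra hlt
    push_neg at hlt
    have hsub : Finset.univ.filter (fun j => s + 1 ≤ f j) ⊆ Finset.Iio i := by
      intro j hj
      rw [Finset.mem_Iio]
      rcases lt_or_ge j i with h' | h'
      · exact h'
      · exfalso
        have := hf i j h'
        have := (Finset.mem_filter.mp hj).2
        omega
    have h := Finset.card_le_card hsub
    rw [Fin.card_Iio] at h
    omega

lemma card_count {n M : ℕ} (h : M ≤ n) :
    (Finset.univ.filter (fun i : Fin n => (i : ℕ) + 1 ≤ M)).card = M := by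
  conv_rhs => rw [← Finset.card_range M]
  refine Finset.card_bij (fun (i : Fin n) _ => (i : ℕ)) ?_ ?_ ?_
  · intro i hi
    have h2 := (Finset.mem_filter.mp hi).2
    show (i : ℕ) ∈ Finset.range M
    rw [Finset.mem_range]
    omega
  · intro i _ j _ hij
    exact Fin.val_injective hij
  · intro b hb
    have hbM := Finset.mem_range.mp hb
    refine ⟨⟨b, by omega⟩, Finset.mem_filter.mpr ⟨Finset.mem_univ _, by simp; omega⟩, rfl⟩

/-- conjugate partition -/
def conjP {n k : ℕ} (l : R0k n k) : Fin k → ℕ :=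
  fun t => (Finset.univ.filter (fun i : Fin n => (t : ℕ) + 1 ≤ (l.1 i : ℕ))).card

lemma conjP_mem {n k : ℕ} (l : R0k n k) : conjP l ∈ Dset k n := by
  refine mem_Dset.mpr ⟨?_, ?_⟩
  · intro t t' htt'
    refine Finset.card_le_card fun i hi => ?_
    have h := (Finset.mem_filter.mp hi).2
    refine Finset.mem_filter.mpr ⟨Finset.mem_univ _, ?_⟩
    have : (t : ℕ) ≤ (t' : ℕ) := htt'
    omega
  · intro t
    have h := Finset.card_filter_le Finset.univ
      (fun i : Fin n => (t : ℕ) + 1 ≤ (l.1 i : ℕ))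
    simpa [conjP] using h

lemma lcoe_antitone {n k : ℕ} (l : R0k n k) :
    ∀ i j : Fin n, i ≤ j → ((l.1 j : ℕ)) ≤ ((l.1 i : ℕ)) :=
  fun i j hij => l.2 i j hij

lemma conjP_card {n k : ℕ} (l : R0k n k) (i : Fin n) :
    (Finset.univ.filter (fun t : Fin k => (i : ℕ) + 1 ≤ conjP l t)).card
      = (l.1 i : ℕ) := by
  have hcong : Finset.univ.filter (fun t : Fin k => (i : ℕ) + 1 ≤ conjP l t)
      = Finset.univ.filter (fun t : Fin k => (t : ℕ) + 1 ≤ (l.1 i : ℕ)) := by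
    ext t
    simp only [Finset.mem_filter, Finset.mem_univ, true_and]
    exact (card_step (fun j => (l.1 j : ℕ)) (lcoe_antitone l) i (t : ℕ)).symm
  rw [hcong, card_count (by exact Fin.is_le _)]

lemma conjP_injective {n k : ℕ} : Function.Injective (conjP : R0k n k → Fin k → ℕ) := by
  intro l l' h
  refine Subtype.ext (funext fun i => Fin.ext ?_)
  have h1 := conjP_card l i
  have h2 := conjP_card l' i
  rw [← h1, ← h2, h]

lemma conjP_surjOn {n k : ℕ} : ∀ d ∈ Dset k n, ∃ l : R0k n k, conjP l = d := by
  intro d hd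
  obtain ⟨hanti, hbd⟩ := mem_Dset.mp hd
  refine ⟨⟨fun i => ⟨(Finset.univ.filter (fun t : Fin k => (i : ℕ) + 1 ≤ d t)).card, ?_⟩, ?_⟩, ?_⟩
  · have h := Finset.card_filter_le Finset.univ
      (fun t : Fin k => (i : ℕ) + 1 ≤ d t)
    simp only [Finset.card_univ, Fintype.card_fin] at h
    omega
  · intro i j hij
    show (Finset.univ.filter (fun t : Fin k => (j : ℕ) + 1 ≤ d t)).card
      ≤ (Finset.univ.filter (fun t : Fin k => (i : ℕ) + 1 ≤ d t)).card
    refine Finset.card_le_card fun t ht => ?_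
    have h := (Finset.mem_filter.mp ht).2
    refine Finset.mem_filter.mpr ⟨Finset.mem_univ _, ?_⟩
    have : (i : ℕ) ≤ (j : ℕ) := hij
    omega
  · funext t
    show (Finset.univ.filter (fun i : Fin n =>
      (t : ℕ) + 1 ≤ (Finset.univ.filter (fun u : Fin k => (i : ℕ) + 1 ≤ d u)).card)).card = d t
    have hcong : Finset.univ.filter (fun i : Fin n =>
        (t : ℕ) + 1 ≤ (Finset.univ.filter (fun u : Fin k => (i : ℕ) + 1 ≤ d u)).card)
        = Finset.univ.filter (fun i : Fin n => (i : ℕ) + 1 ≤ d t) := by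
      ext i
      simp only [Finset.mem_filter, Finset.mem_univ, true_and]
      exact (card_step d hanti t (i : ℕ)).symm
    rw [hcong, card_count (hbd t)]

lemma Bsum_eq_ip {n k : ℕ} (l m : R0k n k) :
    Bsum l m = ip (conjP l) (conjP m) := by
  unfold Bsum ip
  have hind : ∀ M : ℕ, M ≤ k →
      (∑ t : Fin k, if (t : ℕ) + 1 ≤ M then (1:ℕ) else 0) = M := by
    intro M hM
    rw [← Finset.card_filter]
    exact card_count hM
  calc ∑ i : Fin n, ∑ j : Fin n, min ((l.1 i : ℕ)) ((m.1 j : ℕ))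
      = ∑ i : Fin n, ∑ j : Fin n, ∑ t : Fin k,
          (if ((t : ℕ) + 1 ≤ (l.1 i : ℕ)) ∧ ((t : ℕ) + 1 ≤ (m.1 j : ℕ))
            then (1:ℕ) else 0) := by
        refine Finset.sum_congr rfl fun i _ => Finset.sum_congr rfl fun j _ => ?_
        have h1 : ∀ t : Fin k,
            (if ((t : ℕ) + 1 ≤ (l.1 i : ℕ)) ∧ ((t : ℕ) + 1 ≤ (m.1 j : ℕ))
              then (1:ℕ) else 0)
            = (if (t : ℕ) + 1 ≤ min ((l.1 i : ℕ)) ((m.1 j : ℕ)) then 1 else 0) := by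
          intro t
          refine if_congr ?_ rfl rfl
          omega
        rw [Finset.sum_congr rfl (fun t _ => h1 t), hind _ (by
          have := Fin.is_le (l.1 i)
          omega)]
    _ = ∑ t : Fin k, ∑ i : Fin n, ∑ j : Fin n,
          (if ((t : ℕ) + 1 ≤ (l.1 i : ℕ)) ∧ ((t : ℕ) + 1 ≤ (m.1 j : ℕ))
            then (1:ℕ) else 0) := by
        rw [Finset.sum_congr rfl fun i (_ : i ∈ Finset.univ) => Finset.sum_comm]
        exact Finset.sum_comm
    _ = ∑ t : Fin k, conjP l t * conjP m t := by
        refine Finset.sum_congr rfl fun t _ => ?_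
        have hexp : conjP l t * conjP m t
            = (∑ i : Fin n, if (t : ℕ) + 1 ≤ (l.1 i : ℕ) then (1:ℕ) else 0)
              * (∑ j : Fin n, if (t : ℕ) + 1 ≤ (m.1 j : ℕ) then (1:ℕ) else 0) := by
          unfold conjP
          rw [Finset.card_filter, Finset.card_filter]
        rw [hexp, Finset.sum_mul_sum]
        refine Finset.sum_congr rfl fun i _ => Finset.sum_congr rfl fun j _ => ?_
        by_cases hP : (t : ℕ) + 1 ≤ (l.1 i : ℕ) <;>
          by_cases hQ : (t : ℕ) + 1 ≤ (m.1 j : ℕ) <;>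
          simp [hP, hQ]

end Aux

theorem stmt2 (p : ℕ) (hp : Nat.Prime p) (hodd : Odd p) (r : ℕ) (hr : 1 ≤ r)
    (q : ℝ) (hq : q = (p : ℝ) ^ r) (n k : ℕ) (hn : 1 ≤ n) :
    IsUnit (Matrix.of fun l m : R0k n k => (-q) ^ Bsum l m) ∧
    LinearIndependent ℝ (fun l : R0k n k => fun m : R0k n k => (-q) ^ Bsum l m) := by
  have hp2 : (2:ℝ) ≤ (p:ℝ) := by exact_mod_cast hp.two_le
  have hq2 : (2:ℝ) ≤ q := by
    rw [hq]
    calc (2:ℝ) ≤ (p:ℝ) := hp2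
      _ = (p:ℝ) ^ 1 := (pow_one _).symm
      _ ≤ (p:ℝ) ^ r := pow_le_pow_right₀ (by linarith) hr
  have hx : 1 < |(-q)| := by
    rw [abs_neg, abs_of_pos (by linarith)]
    linarith
  set x := -q with hxdef
  have hli : LinearIndependent ℝ
      (fun l : R0k n k => fun m : R0k n k => x ^ Bsum l m) := by
    rw [Fintype.linearIndependent_iff]
    intro g hg
    have hgm : ∀ m0 : R0k n k, ∑ l : R0k n k, g l * x ^ Bsum l m0 = 0 := by
      intro m0
      have h := congrFun hg m0
      simpa [Finset.sum_apply, Pi.smul_apply, smul_eq_mul] using h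
    set c : (Fin k → ℕ) → ℝ :=
      fun d => ∑ l : R0k n k, if conjP l = d then g l else 0 with hcdef
    have hsupp : ∀ d, d ∉ Dset k n → c d = 0 := by
      intro d hd
      rw [hcdef]
      refine Finset.sum_eq_zero fun l _ => ?_
      refine if_neg fun hc => hd ?_
      rw [← hc]
      exact conjP_mem l
    have hhyp : ∀ μ ∈ Dset k n, ∑ d ∈ Dset k n, c d * x ^ ip d μ = 0 := by
      intro μ hμ
      obtain ⟨m0, rfl⟩ := conjP_surjOn μ hμ
      have hswap : ∑ d ∈ Dset k n, c d * x ^ ip d (conjP m0)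
          = ∑ l : R0k n k, ∑ d ∈ Dset k n,
              (if conjP l = d then g l * x ^ ip d (conjP m0) else 0) := by
        rw [hcdef]
        rw [Finset.sum_comm]
        refine Finset.sum_congr rfl fun d _ => ?_
        rw [Finset.sum_mul]
        refine Finset.sum_congr rfl fun l _ => ?_
        rw [ite_mul, zero_mul]
      rw [hswap]
      have hinner : ∀ l : R0k n k,
          ∑ d ∈ Dset k n, (if conjP l = d then g l * x ^ ip d (conjP m0) else 0)
            = g l * x ^ Bsum l m0 := by
        intro l
        rw [Finset.sum_ite_eq, if_pos (conjP_mem l), Bsum_eq_ip]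
      rw [Finset.sum_congr rfl fun l _ => hinner l]
      exact hgm m0
    have hall := claim x hx k n c hsupp hhyp
    intro l0
    have h0 := hall (conjP l0)
    rw [hcdef] at h0
    have hsum : ∑ l : R0k n k, (if conjP l = conjP l0 then g l else 0) = g l0 := by
      have hcong : ∀ l : R0k n k,
          (if conjP l = conjP l0 then g l else 0) = (if l0 = l then g l else 0) := by
        intro l
        refine if_congr ?_ rfl rfl
        constructor
        · intro h
          exact (conjP_injective h).symm
        · intro h
          rw [h]
      rw [Finset.sum_congr rfl fun l _ => hcong l, Finset.sum_ite_eq]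
      simp
    rw [← hsum]
    exact h0
  exact ⟨(Matrix.linearIndependent_rows_iff_isUnit
    (A := Matrix.of fun l m : R0k n k => x ^ Bsum l m)).mp hli, hli⟩
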